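/- Let T be the operator Tf(x) = x f(α(x)) where α is the Gauss map, and let m be the Gauss measure. Then for every p > 1, every n ∈ ℕ, and every f ∈ L^p((0,1), m), one has ∫_0^1 |T^n f(x)|^p dm(x) ≤ g^{(n−1)p} ∫_0^1 |f(x)|^p dm(x), where g = (√5 − 1)/2 < 1. -/

import Mathlib

open MeasureTheory Set
open scoped ENNReal

/-- The Gauss measure. -/
noncomputable def gaussMeasure : Measure ℝ :=
  (volume.withDensity (fun x => ENNReal.ofReal (1 / (Real.log 2 * (1 + x))))).restrict (Ioo 0 1)

/-- The operator `Tf(x) = x f(α(x))` with `α` the Gauss map. -/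
noncomputable def Tgauss (f : ℝ → ℝ) : ℝ → ℝ := fun x => x * f (Int.fract x⁻¹)

/-! ### Auxiliary definitions -/

/-- The Gauss map. -/
noncomputable def gmap : ℝ → ℝ := fun x => Int.fract x⁻¹

/-- Golden-ratio-conjugate constant. -/
noncomputable def gconst : ℝ := (Real.sqrt 5 - 1) / 2

/-- Product of Gauss map iterates. -/
noncomputable def prodP (x : ℝ) (n : ℕ) : ℝ := ∏ k ∈ Finset.range n, gmap^[k] x

lemma measurable_gmap : Measurable gmap := measurable_inv.fract

lemma gconst_facts : 0 < gconst ∧ gconst < 1 ∧ gconst * (gconst + 1) = 1 := by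
  have h5 : Real.sqrt 5 * Real.sqrt 5 = 5 := Real.mul_self_sqrt (by norm_num)
  have h1 : (2:ℝ) < Real.sqrt 5 := by nlinarith [Real.sqrt_nonneg 5]
  have h2 : Real.sqrt 5 < 3 := by nlinarith [Real.sqrt_nonneg 5]
  refine ⟨by unfold gconst; linarith, by unfold gconst; linarith, ?_⟩
  unfold gconst; nlinarith

/-! ### The Gauss map preserves the Gauss measure -/

lemma lintegral_image_eq_lintegral_abs_deriv_mul {s : Set ℝ} {f f' : ℝ → ℝ}
    (hs : MeasurableSet s) (hf' : ∀ x ∈ s, HasDerivWithinAt f (f' x) s x)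
    (hf : InjOn f s) (g : ℝ → ℝ≥0∞) :
    ∫⁻ x in f '' s, g x = ∫⁻ x in s, ENNReal.ofReal |f' x| * g (f x) := by
  simpa only [ContinuousLinearMap.det_toSpanSingleton] using
    lintegral_image_eq_lintegral_abs_det_fderiv_mul volume hs
      (fun x hx => (hf' x hx).hasFDerivWithinAt) hf g

lemma Ioc_union : Ioc (0:ℝ) 1 = ⋃ k : ℕ, Ioc ((k:ℝ)+2)⁻¹ ((k:ℝ)+1)⁻¹ := by
  ext x
  simp only [mem_Ioc, mem_iUnion]
  constructor
  · rintro ⟨hx0, hx1⟩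
    have hz1 : (1:ℝ) ≤ x⁻¹ := (one_le_inv₀ hx0).2 hx1
    set n0 : ℤ := ⌊x⁻¹⌋ with hn0
    have hn1 : 1 ≤ n0 := by
      rw [hn0]; exact_mod_cast Int.le_floor.2 (by exact_mod_cast hz1)
    have hfl : (n0:ℝ) ≤ x⁻¹ := Int.floor_le _
    have hfl2 : x⁻¹ < (n0:ℝ) + 1 := Int.lt_floor_add_one _
    refine ⟨(n0 - 1).toNat, ?_, ?_⟩
    · have hcast : ((n0 - 1).toNat : ℝ) = (n0:ℝ) - 1 := by
        have := Int.toNat_of_nonneg (by omega : (0:ℤ) ≤ n0 - 1)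
        exact_mod_cast congrArg (Int.cast : ℤ → ℝ) this
      rw [hcast]
      have hpos : (0:ℝ) < (n0:ℝ) + 1 := by positivity
      have heq : (n0:ℝ) - 1 + 2 = (n0:ℝ) + 1 := by ring
      rw [heq, inv_lt_comm₀ hpos hx0]
      exact hfl2
    · have hcast : ((n0 - 1).toNat : ℝ) = (n0:ℝ) - 1 := by
        have := Int.toNat_of_nonneg (by omega : (0:ℤ) ≤ n0 - 1)
        exact_mod_cast congrArg (Int.cast : ℤ → ℝ) this
      rw [hcast]
      have h0 : (0:ℝ) < (n0:ℝ) := by exact_mod_cast hn1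
      have : (n0:ℝ) - 1 + 1 = (n0:ℝ) := by ring
      rw [this, le_inv_comm₀ hx0 h0]
      exact hfl
  · rintro ⟨k, hk1, hk2⟩
    have h2 : (0:ℝ) < (k:ℝ) + 2 := by positivity
    have h1 : (0:ℝ) < (k:ℝ) + 1 := by positivity
    refine ⟨lt_trans (by positivity) hk1, le_trans hk2 ?_⟩
    rw [inv_le_one_iff₀]; right; linarith

lemma mem_Sk {k : ℕ} {x : ℝ} (hx : x ∈ Ioc ((k:ℝ)+2)⁻¹ ((k:ℝ)+1)⁻¹) :
    0 < x ∧ (k:ℝ) + 1 ≤ x⁻¹ ∧ x⁻¹ < (k:ℝ) + 2 ∧ Int.fract x⁻¹ = x⁻¹ - ((k:ℝ)+1) := by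
  obtain ⟨hk1, hk2⟩ := hx
  have h2 : (0:ℝ) < (k:ℝ) + 2 := by positivity
  have h1 : (0:ℝ) < (k:ℝ) + 1 := by positivity
  have hx0 : 0 < x := lt_trans (by positivity) hk1
  have ha : (k:ℝ) + 1 ≤ x⁻¹ := by
    rw [le_inv_comm₀ h1 hx0]; exact hk2
  have hb : x⁻¹ < (k:ℝ) + 2 := by
    rw [inv_lt_comm₀ hx0 h2]; exact hk1
  refine ⟨hx0, ha, hb, ?_⟩
  have hfloor : ⌊x⁻¹⌋ = (k:ℤ) + 1 := by
    rw [Int.floor_eq_iff]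
    constructor <;> push_cast <;> linarith
  rw [Int.fract, hfloor]; push_cast; ring

lemma image_phi (k : ℕ) :
    (fun y : ℝ => (y + ((k:ℝ)+1))⁻¹) '' Ico (0:ℝ) 1 = Ioc ((k:ℝ)+2)⁻¹ ((k:ℝ)+1)⁻¹ := by
  ext x
  constructor
  · rintro ⟨y, ⟨hy0, hy1⟩, rfl⟩
    have h1 : (0:ℝ) < (k:ℝ) + 1 := by positivity
    have h2 : (0:ℝ) < y + ((k:ℝ)+1) := by linarith
    constructor
    · apply inv_strictAnti₀ h2; linarith
    · apply inv_anti₀ h1; linarith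
  · intro hx
    obtain ⟨hx0, ha, hb, _⟩ := mem_Sk hx
    refine ⟨x⁻¹ - ((k:ℝ)+1), ⟨by linarith, by linarith⟩, ?_⟩
    show (x⁻¹ - ((k:ℝ)+1) + ((k:ℝ)+1))⁻¹ = x
    rw [show x⁻¹ - ((k:ℝ)+1) + ((k:ℝ)+1) = x⁻¹ by ring, inv_inv]

lemma telescope_sum {y : ℝ} (hy : 0 ≤ y) :
    (∑' k : ℕ, ENNReal.ofReal ((1 / Real.log 2) * ((y+((k:ℝ)+1))⁻¹ - (y+((k:ℝ)+2))⁻¹)))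
      = ENNReal.ofReal (1 / (Real.log 2 * (1 + y))) := by
  have hlog : 0 < Real.log 2 := Real.log_pos (by norm_num)
  set b : ℕ → ℝ := fun k => (1 / Real.log 2) * (y+((k:ℝ)+1))⁻¹ with hb
  have hbpos : ∀ k : ℕ, 0 < y + ((k:ℝ)+1) := fun k => by positivity
  have hmono : ∀ k : ℕ, 0 ≤ b k - b (k+1) := by
    intro k
    simp only [hb]
    push_cast
    rw [sub_nonneg]
    refine mul_le_mul_of_nonneg_left ?_ (by positivity : (0:ℝ) ≤ 1 / Real.log 2)
    apply inv_anti₀ (hbpos k)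
    push_cast; linarith
  have hterm : ∀ k : ℕ, (1 / Real.log 2) * ((y+((k:ℝ)+1))⁻¹ - (y+((k:ℝ)+2))⁻¹) = b k - b (k+1) := by
    intro k; simp only [hb]; push_cast; ring
  have hsum : HasSum (fun k : ℕ => b k - b (k+1)) (1 / (Real.log 2 * (1 + y))) := by
    rw [hasSum_iff_tendsto_nat_of_nonneg hmono]
    have hps : ∀ n : ℕ, ∑ i ∈ Finset.range n, (b i - b (i+1)) = b 0 - b n :=
      fun n => Finset.sum_range_sub' b n
    simp only [hps]
    have hlim : Filter.Tendsto b Filter.atTop (nhds 0) := by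
      rw [hb]
      have h1 : Filter.Tendsto (fun k : ℕ => y + ((k:ℝ)+1)) Filter.atTop Filter.atTop := by
        apply Filter.tendsto_atTop_add_const_left
        apply Filter.tendsto_atTop_add_const_right
        exact tendsto_natCast_atTop_atTop
      have h2 : Filter.Tendsto (fun k : ℕ => (y+((k:ℝ)+1))⁻¹) Filter.atTop (nhds 0) :=
        Filter.Tendsto.inv_tendsto_atTop h1
      simpa using h2.const_mul (1 / Real.log 2)
    have hb0 : b 0 = 1 / (Real.log 2 * (1 + y)) := by
      simp only [hb]; push_cast; rw [one_div, one_div, mul_inv]; ring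
    have := hlim.const_sub (b 0)
    simpa [hb0] using this
  calc (∑' k : ℕ, ENNReal.ofReal ((1 / Real.log 2) * ((y+((k:ℝ)+1))⁻¹ - (y+((k:ℝ)+2))⁻¹)))
      = ∑' k : ℕ, ENNReal.ofReal (b k - b (k+1)) := by
        congr 1; ext k; rw [hterm]
    _ = ENNReal.ofReal (∑' k : ℕ, (b k - b (k+1))) :=
        (ENNReal.ofReal_tsum_of_nonneg hmono hsum.summable).symm
    _ = ENNReal.ofReal (1 / (Real.log 2 * (1 + y))) := by rw [hsum.tsum_eq]

lemma piece_eq (H : ℝ → ℝ≥0∞) (hH : Measurable H) (k : ℕ) :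
    ∫⁻ x in Ioc ((k:ℝ)+2)⁻¹ ((k:ℝ)+1)⁻¹,
        ENNReal.ofReal (1 / (Real.log 2 * (1 + x))) * H (gmap x)
      = ∫⁻ y in Ico (0:ℝ) 1,
        ENNReal.ofReal ((1 / Real.log 2) * ((y+((k:ℝ)+1))⁻¹ - (y+((k:ℝ)+2))⁻¹)) * H y := by
  have hlog : 0 < Real.log 2 := Real.log_pos (by norm_num)
  set c : ℝ := (k:ℝ) + 1 with hc
  have hstep1 : ∫⁻ x in Ioc ((k:ℝ)+2)⁻¹ ((k:ℝ)+1)⁻¹,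
      ENNReal.ofReal (1 / (Real.log 2 * (1 + x))) * H (gmap x)
      = ∫⁻ x in Ioc ((k:ℝ)+2)⁻¹ ((k:ℝ)+1)⁻¹,
        ENNReal.ofReal (1 / (Real.log 2 * (1 + x))) * H (x⁻¹ - c) := by
    apply setLIntegral_congr_fun measurableSet_Ioc
    intro x hx; dsimp only
    obtain ⟨_, _, _, hfr⟩ := mem_Sk hx
    rw [gmap, hfr, hc]
  rw [hstep1]
  have himg := image_phi k
  rw [← hc] at himg
  rw [← himg]
  have hderiv : ∀ y ∈ Ico (0:ℝ) 1,
      HasDerivWithinAt (fun y : ℝ => (y + c)⁻¹) (-1 / (y + c)^2) (Ico (0:ℝ) 1) y := by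
    intro y hy
    have hyc : y + c ≠ 0 := by rw [hc]; push_cast; intro h; nlinarith [hy.1]
    have h := ((hasDerivAt_id y).add_const c).inv hyc
    exact h.hasDerivWithinAt
  have hinj : InjOn (fun y : ℝ => (y + c)⁻¹) (Ico (0:ℝ) 1) := by
    intro a _ b _ h
    have := inv_injective h
    linarith [this]
  rw [_root_.lintegral_image_eq_lintegral_abs_deriv_mul measurableSet_Ico hderiv hinj]
  apply setLIntegral_congr_fun measurableSet_Ico
  intro y hy; dsimp only
  have hyc : (0:ℝ) < y + c := by rw [hc]; push_cast; nlinarith [hy.1]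
  have harg : ((y + c)⁻¹)⁻¹ - c = y := by rw [inv_inv]; ring
  rw [harg]
  have habs : |(-1 : ℝ) / (y + c)^2| = 1 / (y + c)^2 := by
    rw [abs_div, abs_neg, abs_one, abs_of_pos (by positivity)]
  rw [habs, ← mul_assoc, ← ENNReal.ofReal_mul (by positivity)]
  congr 2
  have h1 : (1:ℝ) + (y + c)⁻¹ = (y + c + 1) / (y + c) := by field_simp
  rw [h1, hc]
  have h2 : (0:ℝ) < y + ((k:ℝ)+1) := by positivity
  have h3 : (0:ℝ) < y + ((k:ℝ)+1) + 1 := by positivity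
  have h4 : y + ((k:ℝ)+2) = y + ((k:ℝ)+1) + 1 := by ring
  rw [h4]
  field_simp
  ring

lemma gauss_lintegral_comp (H : ℝ → ℝ≥0∞) (hH : Measurable H) :
    ∫⁻ x, H (gmap x) ∂gaussMeasure = ∫⁻ x, H x ∂gaussMeasure := by
  have hlog : 0 < Real.log 2 := Real.log_pos (by norm_num)
  set ρ : ℝ → ℝ≥0∞ := fun x => ENNReal.ofReal (1 / (Real.log 2 * (1 + x))) with hρ
  have hρm : Measurable ρ := by
    apply Measurable.ennreal_ofReal
    exact measurable_const.div (measurable_const.mul (measurable_const.add measurable_id))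
  have hunfold : ∀ G : ℝ → ℝ≥0∞, Measurable G →
      ∫⁻ x, G x ∂gaussMeasure = ∫⁻ x in Ioo (0:ℝ) 1, ρ x * G x := by
    intro G hG
    rw [gaussMeasure, ← hρ]
    rw [show (∫⁻ x, G x ∂((volume.withDensity ρ).restrict (Ioo 0 1)))
        = ∫⁻ x in Ioo (0:ℝ) 1, G x ∂(volume.withDensity ρ) from rfl]
    rw [setLIntegral_withDensity_eq_setLIntegral_mul volume hρm hG measurableSet_Ioo]
    rfl
  have hSmeas : ∀ k : ℕ, MeasurableSet (Ioc ((k:ℝ)+2)⁻¹ ((k:ℝ)+1)⁻¹) :=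
    fun k => measurableSet_Ioc
  have hdisj : Pairwise (Function.onFun Disjoint fun k : ℕ => Ioc ((k:ℝ)+2)⁻¹ ((k:ℝ)+1)⁻¹) := by
    intro i j hij
    rw [Function.onFun, Set.disjoint_left]
    intro x hxi hxj
    obtain ⟨_, hi1, hi2, _⟩ := mem_Sk hxi
    obtain ⟨_, hj1, hj2, _⟩ := mem_Sk hxj
    apply hij
    have h1 : (i:ℝ) < ((j:ℕ)+1 :ℕ) := by push_cast; linarith
    have h2 : (j:ℝ) < ((i:ℕ)+1 :ℕ) := by push_cast; linarith
    have h1' : i < j + 1 := by exact_mod_cast h1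
    have h2' : j < i + 1 := by exact_mod_cast h2
    omega
  calc ∫⁻ x, H (gmap x) ∂gaussMeasure
      = ∫⁻ x in Ioo (0:ℝ) 1, ρ x * H (gmap x) :=
        hunfold _ (hH.comp measurable_gmap)
    _ = ∫⁻ x in Ioc (0:ℝ) 1, ρ x * H (gmap x) := setLIntegral_congr Ioo_ae_eq_Ioc
    _ = ∫⁻ x in ⋃ k : ℕ, Ioc ((k:ℝ)+2)⁻¹ ((k:ℝ)+1)⁻¹, ρ x * H (gmap x) := by
        rw [← Ioc_union]
    _ = ∑' k : ℕ, ∫⁻ x in Ioc ((k:ℝ)+2)⁻¹ ((k:ℝ)+1)⁻¹, ρ x * H (gmap x) :=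
        lintegral_iUnion hSmeas hdisj _
    _ = ∑' k : ℕ, ∫⁻ y in Ico (0:ℝ) 1,
          ENNReal.ofReal ((1 / Real.log 2) * ((y+((k:ℝ)+1))⁻¹ - (y+((k:ℝ)+2))⁻¹)) * H y := by
        congr 1; funext k
        exact piece_eq H hH k
    _ = ∫⁻ y in Ico (0:ℝ) 1, ∑' k : ℕ,
          ENNReal.ofReal ((1 / Real.log 2) * ((y+((k:ℝ)+1))⁻¹ - (y+((k:ℝ)+2))⁻¹)) * H y := by
        rw [← lintegral_tsum]
        intro k
        apply Measurable.aemeasurable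
        apply Measurable.mul _ hH
        apply Measurable.ennreal_ofReal
        exact (((measurable_id.add_const _).inv.sub
          (measurable_id.add_const _).inv).const_mul _)
    _ = ∫⁻ y in Ico (0:ℝ) 1, ρ y * H y := by
        apply setLIntegral_congr_fun measurableSet_Ico
        intro y hy; dsimp only
        rw [ENNReal.tsum_mul_right, telescope_sum hy.1]
    _ = ∫⁻ y in Ioo (0:ℝ) 1, ρ y * H y := setLIntegral_congr Ioo_ae_eq_Ico.symm
    _ = ∫⁻ x, H x ∂gaussMeasure := (hunfold _ hH).symm

lemma gauss_measurePreserving : MeasurePreserving gmap gaussMeasure gaussMeasure := by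
  refine ⟨measurable_gmap, ?_⟩
  ext s hs
  rw [Measure.map_apply measurable_gmap hs]
  have h := gauss_lintegral_comp (s.indicator 1) (measurable_one.indicator hs)
  have h1 : ∀ x, s.indicator (1 : ℝ → ℝ≥0∞) (gmap x) = (gmap ⁻¹' s).indicator 1 x := by
    intro x
    by_cases hx : gmap x ∈ s <;> simp [Set.indicator, hx]
  simp_rw [h1] at h
  rwa [lintegral_indicator_one (hs.preimage measurable_gmap), lintegral_indicator_one hs] at h

/-! ### Pointwise bounds -/

lemma gmap_mem {x : ℝ} (hx : x ∈ Ioo (0:ℝ) 1) (hirr : Irrational x) :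
    gmap x ∈ Ioo (0:ℝ) 1 ∧ Irrational (gmap x) := by
  have hinv : Irrational x⁻¹ := hirr.inv
  have hfr : Irrational (gmap x) := by
    rw [gmap]
    show Irrational (Int.fract x⁻¹)
    rw [Int.fract]
    exact Irrational.sub_intCast hinv _
  refine ⟨⟨?_, Int.fract_lt_one _⟩, hfr⟩
  rcases lt_or_eq_of_le (Int.fract_nonneg x⁻¹) with h | h
  · exact h
  · exfalso; exact (hfr.ne_int 0) (by rw [gmap]; exact_mod_cast h.symm)

lemma iter_mem {x : ℝ} (hx : x ∈ Ioo (0:ℝ) 1) (hirr : Irrational x) (n : ℕ) :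
    gmap^[n] x ∈ Ioo (0:ℝ) 1 ∧ Irrational (gmap^[n] x) := by
  induction n with
  | zero => exact ⟨hx, hirr⟩
  | succ n ih => rw [Function.iterate_succ_apply']; exact gmap_mem ih.1 ih.2

lemma gmap_step {x : ℝ} (hx : x ∈ Ioo (0:ℝ) 1) (hirr : Irrational x) :
    x * gmap x ≤ 1 - x := by
  obtain ⟨hx0, hx1⟩ := hx
  have hfl : (1:ℤ) ≤ ⌊x⁻¹⌋ := by
    apply Int.le_floor.2
    push_cast
    exact (one_le_inv₀ hx0).2 (le_of_lt hx1)
  have hfl' : (1:ℝ) ≤ (⌊x⁻¹⌋ : ℝ) := by exact_mod_cast hfl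
  have hkey : x * gmap x = 1 - x * (⌊x⁻¹⌋:ℝ) := by
    rw [gmap]
    show x * Int.fract x⁻¹ = 1 - x * (⌊x⁻¹⌋:ℝ)
    rw [Int.fract, mul_sub, mul_inv_cancel₀ (ne_of_gt hx0)]
  rw [hkey]
  nlinarith

lemma prodP_succ (x : ℝ) (n : ℕ) : prodP x (n+1) = prodP x n * gmap^[n] x :=
  Finset.prod_range_succ _ _

lemma prodP_nonneg {x : ℝ} (hx : x ∈ Ioo (0:ℝ) 1) (hirr : Irrational x) (n : ℕ) :
    0 ≤ prodP x n :=
  Finset.prod_nonneg fun k _ => le_of_lt (iter_mem hx hirr k).1.1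

lemma prodP_bound {x : ℝ} (hx : x ∈ Ioo (0:ℝ) 1) (hirr : Irrational x) (n : ℕ) :
    prodP x n * gconst ≤ gconst ^ n := by
  obtain ⟨hg0, hg1, hgfix⟩ := gconst_facts
  have hV : ∀ n, prodP x (n+1) + (gconst+1) * prodP x n ≤ gconst ^ n * (x + (gconst+1)) := by
    intro n
    induction n with
    | zero =>
        have h1 : prodP x 1 = x := by simp [prodP]
        have h0 : prodP x 0 = 1 := by simp [prodP]
        rw [h1, h0, pow_zero]; linarith
    | succ n ih =>
        have hxn := iter_mem hx hirr n
        have hstep := gmap_step hxn.1 hxn.2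
        have hit : gmap (gmap^[n] x) = gmap^[n+1] x := (Function.iterate_succ_apply' gmap n x).symm
        rw [hit] at hstep
        have hs := prodP_nonneg hx hirr n
        have e1 : prodP x (n+1) = prodP x n * gmap^[n] x := prodP_succ x n
        have hu : prodP x (n+2) ≤ prodP x n - prodP x (n+1) := by
          rw [prodP_succ x (n+1), e1]
          calc prodP x n * gmap^[n] x * gmap^[n+1] x
              = prodP x n * (gmap^[n] x * gmap^[n+1] x) := by ring
            _ ≤ prodP x n * (1 - gmap^[n] x) := mul_le_mul_of_nonneg_left hstep hs
            _ = prodP x n - prodP x n * gmap^[n] x := by ring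
        have key : prodP x (n+2) + (gconst+1) * prodP x (n+1)
            ≤ gconst * (prodP x (n+1) + (gconst+1) * prodP x n) := by
          have h3 : gconst * (prodP x (n+1) + (gconst+1) * prodP x n)
              = gconst * prodP x (n+1) + prodP x n := by
            linear_combination prodP x n * hgfix
          rw [h3]
          nlinarith [hu]
        calc prodP x (n+2) + (gconst+1) * prodP x (n+1)
            ≤ gconst * (prodP x (n+1) + (gconst+1) * prodP x n) := key
          _ ≤ gconst * (gconst ^ n * (x + (gconst+1))) :=
              mul_le_mul_of_nonneg_left ih (le_of_lt hg0)
          _ = gconst ^ (n+1) * (x + (gconst+1)) := by ring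
  have h1 := hV n
  have hP1 := prodP_nonneg hx hirr (n+1)
  have h2 : (gconst+1) * prodP x n ≤ gconst ^ n * (x + (gconst+1)) := by linarith
  have h3 := mul_le_mul_of_nonneg_left h2 (le_of_lt hg0)
  have h4 : gconst * ((gconst+1) * prodP x n) = prodP x n := by
    rw [← mul_assoc, hgfix, one_mul]
  rw [h4] at h3
  have h5 := mul_le_mul_of_nonneg_right h3 (le_of_lt hg0)
  have hcoef : gconst * (x + (gconst+1)) * gconst ≤ 1 := by
    nlinarith [hx.2, mul_nonneg (mul_nonneg (le_of_lt hg0) (le_of_lt hg0))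
      (by linarith [hx.2] : (0:ℝ) ≤ 1 - x)]
  calc prodP x n * gconst ≤ gconst * (gconst ^ n * (x + (gconst+1))) * gconst := h5
    _ = gconst ^ n * (gconst * (x + (gconst+1)) * gconst) := by ring
    _ ≤ gconst ^ n * 1 := mul_le_mul_of_nonneg_left hcoef (pow_nonneg (le_of_lt hg0) n)
    _ = gconst ^ n := mul_one _

lemma Tgauss_iterate (f : ℝ → ℝ) (n : ℕ) (x : ℝ) :
    Tgauss^[n] f x = prodP x n * f (gmap^[n] x) := by
  induction n generalizing x with
  | zero => simp [prodP]
  | succ n ih =>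
      rw [Function.iterate_succ_apply']
      show x * (Tgauss^[n] f) (Int.fract x⁻¹) = _
      rw [show Int.fract x⁻¹ = gmap x from rfl, ih (gmap x)]
      have hp : prodP x (n+1) = x * prodP (gmap x) n := by
        rw [prodP, prodP, Finset.prod_range_succ']
        simp only [Function.iterate_succ_apply, Function.iterate_zero_apply]
        ring
      have hg : gmap^[n] (gmap x) = gmap^[n+1] x := (Function.iterate_succ_apply gmap n x).symm
      rw [hg, hp]
      ring

theorem Top_iterate_Lp_bound (p : ℝ) (hp : 1 < p) (n : ℕ) (f : ℝ → ℝ)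
    (hf : MemLp f (ENNReal.ofReal p) gaussMeasure) :
    (∫⁻ x, ENNReal.ofReal (|Tgauss^[n] f x| ^ p) ∂gaussMeasure) ≤
      ENNReal.ofReal (((Real.sqrt 5 - 1) / 2) ^ (((n : ℝ) - 1) * p)) *
        ∫⁻ x, ENNReal.ofReal (|f x| ^ p) ∂gaussMeasure := by
  obtain ⟨hg0, hg1, hgfix⟩ := gconst_facts
  have hp0 : (0:ℝ) < p := lt_trans one_pos hp
  have hae1 : ∀ᵐ x ∂gaussMeasure, x ∈ Ioo (0:ℝ) 1 := by
    rw [gaussMeasure]; exact ae_restrict_mem measurableSet_Ioo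
  have hae2 : ∀ᵐ x ∂gaussMeasure, Irrational x := by
    rw [ae_iff]
    have hsub : {x : ℝ | ¬ Irrational x} = Set.range ((↑) : ℚ → ℝ) := by
      ext x; simp [Irrational]
    have hnull : volume (Set.range ((↑) : ℚ → ℝ)) = 0 :=
      (Set.countable_range _).measure_zero _
    rw [hsub]
    refine le_antisymm ?_ zero_le
    calc gaussMeasure (Set.range ((↑) : ℚ → ℝ))
        ≤ (volume.withDensity (fun x => ENNReal.ofReal (1 / (Real.log 2 * (1 + x)))))
            (Set.range ((↑) : ℚ → ℝ)) := by
          rw [gaussMeasure]; exact Measure.restrict_apply_le _ _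
      _ = 0 := (withDensity_absolutelyContinuous volume _) hnull
  have hptwise : ∀ᵐ x ∂gaussMeasure, ENNReal.ofReal (|Tgauss^[n] f x| ^ p)
      ≤ ENNReal.ofReal (gconst ^ (((n:ℝ) - 1) * p)) * ENNReal.ofReal (|f (gmap^[n] x)| ^ p) := by
    filter_upwards [hae1, hae2] with x hx hirr
    have hP0 : 0 ≤ prodP x n := prodP_nonneg hx hirr n
    have hPb : prodP x n ≤ gconst ^ ((n:ℝ) - 1) := by
      have h := prodP_bound hx hirr n
      have he : gconst ^ ((n:ℝ) - 1) = gconst ^ (n:ℕ) / gconst := by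
        rw [Real.rpow_sub hg0, Real.rpow_one, Real.rpow_natCast]
      rw [he, le_div_iff₀ hg0]
      exact h
    have heq : |Tgauss^[n] f x| ^ p = prodP x n ^ p * |f (gmap^[n] x)| ^ p := by
      rw [Tgauss_iterate f n x, abs_mul, abs_of_nonneg hP0,
        Real.mul_rpow hP0 (abs_nonneg _)]
    rw [heq, ← ENNReal.ofReal_mul (by positivity)]
    apply ENNReal.ofReal_le_ofReal
    apply mul_le_mul_of_nonneg_right _ (Real.rpow_nonneg (abs_nonneg _) p)
    calc prodP x n ^ p ≤ (gconst ^ ((n:ℝ)-1)) ^ p :=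
          Real.rpow_le_rpow hP0 hPb (le_of_lt hp0)
      _ = gconst ^ (((n:ℝ)-1) * p) := (Real.rpow_mul (le_of_lt hg0) _ _).symm
  have hmeasH : Measurable (fun t : ℝ => ENNReal.ofReal (|t| ^ p)) := by
    apply Measurable.ennreal_ofReal
    exact ((Real.continuous_rpow_const (le_of_lt (lt_trans one_pos hp))).comp
      continuous_abs).measurable
  have hpres : MeasurePreserving (gmap^[n]) gaussMeasure gaussMeasure :=
    gauss_measurePreserving.iterate n
  have hchange : ∫⁻ x, ENNReal.ofReal (|f (gmap^[n] x)| ^ p) ∂gaussMeasure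
      = ∫⁻ x, ENNReal.ofReal (|f x| ^ p) ∂gaussMeasure := by
    have haem : AEMeasurable (fun y => ENNReal.ofReal (|f y| ^ p))
        (Measure.map (gmap^[n]) gaussMeasure) := by
      rw [hpres.map_eq]
      exact hmeasH.comp_aemeasurable hf.1.aemeasurable
    rw [← lintegral_map' haem (hpres.measurable.aemeasurable), hpres.map_eq]
  have hconst : ((Real.sqrt 5 - 1) / 2) ^ (((n : ℝ) - 1) * p) = gconst ^ (((n:ℝ)-1)*p) := by
    rw [gconst]
  rw [hconst]
  calc ∫⁻ x, ENNReal.ofReal (|Tgauss^[n] f x| ^ p) ∂gaussMeasure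
      ≤ ∫⁻ x, ENNReal.ofReal (gconst ^ (((n:ℝ)-1)*p))
          * ENNReal.ofReal (|f (gmap^[n] x)| ^ p) ∂gaussMeasure :=
        lintegral_mono_ae hptwise
    _ = ENNReal.ofReal (gconst ^ (((n:ℝ)-1)*p))
          * ∫⁻ x, ENNReal.ofReal (|f (gmap^[n] x)| ^ p) ∂gaussMeasure :=
        lintegral_const_mul' _ _ ENNReal.ofReal_ne_top
    _ = ENNReal.ofReal (gconst ^ (((n:ℝ)-1)*p))
          * ∫⁻ x, ENNReal.ofReal (|f x| ^ p) ∂gaussMeasure := by rw [hchange]
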